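/- Let (B, L) be a Banach SNL space, A a linear L-positive subspace of B, d ∈ B, C := A − d, and q^C the restriction of q_L to C (∞ off C). Then for b ∈ C, the subdifferential ∂q^C(b) equals Lb + A⁰, where A⁰ := {b* ∈ B* : ⟨a, b*⟩ = 0 for all a ∈ A}; and ∂q^C(b) = ∅ for b ∉ C. -/

import Mathlib

open NormedSpace

noncomputable def qL {B : Type*} [NormedAddCommGroup B] [NormedSpace ℝ B]
    (L : B →L[ℝ] StrongDual ℝ B) (b : B) : ℝ := (1 / 2) * L b b

/-- The subdifferential at `b` of the function `q^C` which equals `q_L` on `C`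
and `∞` off `C`:  `b* ∈ ∂q^C(b)` iff `b ∈ C` and
`q^C(c) ≥ q^C(b) + ⟨c − b, b*⟩` for all `c ∈ C`. -/
def subdiffQC {B : Type*} [NormedAddCommGroup B] [NormedSpace ℝ B]
    (L : B →L[ℝ] StrongDual ℝ B) (C : Set B) (b : B) : Set (StrongDual ℝ B) :=
  {b' | b ∈ C ∧ ∀ c ∈ C, qL L b + b' (c - b) ≤ qL L c}

lemma qL_add {B : Type*} [NormedAddCommGroup B] [NormedSpace ℝ B]
    (L : B →L[ℝ] StrongDual ℝ B) (hsym : ∀ b c : B, L c b = L b c) (b a : B) :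
    qL L (b + a) = qL L b + L b a + qL L a := by
  simp only [qL, map_add, ContinuousLinearMap.add_apply]
  rw [hsym b a]
  ring

lemma qL_smul {B : Type*} [NormedAddCommGroup B] [NormedSpace ℝ B]
    (L : B →L[ℝ] StrongDual ℝ B) (t : ℝ) (a : B) :
    qL L (t • a) = t ^ 2 * qL L a := by
  simp only [qL, map_smul, ContinuousLinearMap.smul_apply, smul_eq_mul]
  ring

theorem stmt11 {B : Type*} [NormedAddCommGroup B] [NormedSpace ℝ B] [CompleteSpace B]
    [Nontrivial B]
    (L : B →L[ℝ] StrongDual ℝ B) (hL : ‖L‖ ≤ 1)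
    (hsym : ∀ b c : B, L c b = L b c)
    (A : Subspace ℝ B) (hpos : ∀ a ∈ A, 0 ≤ qL L a)
    (d : B) (C : Set B) (hC : C = (fun a => a - d) '' (A : Set B)) :
    ∀ b : B,
      (b ∈ C → subdiffQC L C b = {b' : StrongDual ℝ B | ∀ a ∈ A, (b' - L b) a = 0}) ∧
      (b ∉ C → subdiffQC L C b = ∅) := by
  intro b
  constructor
  · intro hb
    obtain ⟨a₀, ha₀, hba⟩ := hC ▸ hb
    ext b'
    simp only [subdiffQC, Set.mem_setOf_eq, ContinuousLinearMap.sub_apply]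
    constructor
    · rintro ⟨-, h⟩ a ha
      -- key: for all a ∈ A, b' a - L b a ≤ 0
      have key : ∀ a ∈ A, b' a - L b a ≤ 0 := by
        intro a ha
        have step : ∀ t : ℝ, 0 < t → b' a - L b a ≤ t * qL L a := by
          intro t ht
          have hc : b + t • a ∈ C := by
            rw [hC]
            refine ⟨a₀ + t • a, A.add_mem ha₀ (A.smul_mem t ha), ?_⟩
            simp only
            rw [← hba]; dsimp only; abel
          have := h _ hc
          rw [qL_add L hsym b (t • a)] at this
          simp only [add_sub_cancel_left, map_smul, smul_eq_mul,
            ContinuousLinearMap.smul_apply, qL_smul] at this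
          have h2 : t * b' a ≤ t * L b a + t ^ 2 * qL L a := by nlinarith [this]
          have h3 : t * (b' a - L b a) ≤ t * (t * qL L a) := by nlinarith
          exact le_of_mul_le_mul_left h3 ht
        by_contra hcon
        push_neg at hcon
        have hq := hpos a ha
        have := step ((b' a - L b a) / (2 * (qL L a + 1)))
          (by positivity)
        set x := b' a - L b a
        set q := qL L a
        rw [div_mul_eq_mul_div, le_div_iff₀ (by positivity)] at this
        nlinarith
      have h1 := key a ha
      have h2 := key (-a) (A.neg_mem ha)
      simp only [map_neg] at h2
      linarith
    · intro h
      refine ⟨hb, fun c hc => ?_⟩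
      obtain ⟨a₁, ha₁, hca⟩ := hC ▸ hc
      have hmem : c - b ∈ A := by
        have : c - b = a₁ - a₀ := by rw [← hba, ← hca]; dsimp only; abel
        rw [this]; exact A.sub_mem ha₁ ha₀
      have hb' : b' (c - b) = L b (c - b) := by
        have := h _ hmem; linarith
      have hq : qL L c = qL L b + L b (c - b) + qL L (c - b) := by
        have := qL_add L hsym b (c - b)
        simpa using this
      have := hpos _ hmem
      rw [hb', hq]; linarith
  · intro hb
    ext b'
    simp only [subdiffQC, Set.mem_setOf_eq, Set.mem_empty_iff_false, iff_false, not_and]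
    exact fun h => absurd h hb
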